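/- Let t, t' ∈ B_n be distinct bracketings of size n, and let m ≥ 1. The graph algebra A(C_m) of the directed m-cycle C_m satisfies the bracketing identity t ≈ t' if and only if m divides M(t,t'). -/

import Mathlib

namespace AssocSpec

/-- Bracketings of products `x₁ x₂ ⋯ xₙ` represented as binary trees whose
leaves, read from left to right, are the variables `x₁, …, xₙ`. -/
inductive BTree : Type
  | leaf : BTree
  | node : BTree → BTree → BTree

namespace BTree

/-- The size of a bracketing: its number of variables (leaves). -/
def size : BTree → ℕ
  | leaf => 1
  | node l r => l.size + r.size

/-- Evaluate a bracketing in a magma `(A, op)`, the leaves taking the values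
`f k, f (k+1), …` from left to right. -/
def evalFrom {A : Type*} (op : A → A → A) : BTree → (ℕ → A) → ℕ → A
  | leaf, f, k => f k
  | node l r, f, k => op (evalFrom op l f k) (evalFrom op r f (k + l.size))

/-- The term operation induced by a bracketing `t` on a magma `(A, op)`;
the `i`-th variable (0-indexed) takes the value `f i`. -/
def termOp {A : Type*} (op : A → A → A) (t : BTree) (f : ℕ → A) : A :=
  evalFrom op t f 0

/-- The depth sequence of the DFS tree `G(t)` of a bracketing `t`: the `i`-th
entry is the depth of the `i`-th variable (0-indexed) in `G(t)`. -/
def depths : BTree → List ℕ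
  | leaf => [0]
  | node l r => l.depths ++ r.depths.map (· + 1)

/-- The depth of the `i`-th variable (0-indexed) in the DFS tree `G(t)`. -/
def depth (t : BTree) (i : ℕ) : ℕ := t.depths.getD i 0

/-- The height of the DFS tree `G(t)`: the maximum depth of a variable. -/
def height (t : BTree) : ℕ := t.depths.foldr max 0

/-- The edges of the DFS tree `G(t)`, the variables being indexed from the
given offset: `(p, c)` is an edge iff `x_p` is the parent of `x_c`. -/
def edgesFrom : BTree → ℕ → List (ℕ × ℕ)
  | leaf, _ => []
  | node l r, k => (k, k + l.size) :: (l.edgesFrom k ++ r.edgesFrom (k + l.size))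

/-- The edges of the DFS tree `G(t)` (variables indexed from `0`). -/
def edges (t : BTree) : List (ℕ × ℕ) := t.edgesFrom 0

end BTree

open Classical in
/-- The operation of the graph algebra of the digraph with vertex set `V` and
edge relation `E`; `none` plays the role of `∞`. -/
noncomputable def gaOp {V : Type*} (E : V → V → Prop) :
    Option V → Option V → Option V
  | some x, some y => if E x y then some x else none
  | _, _ => none

/-- The magma `(A, op)` satisfies the bracketing identity `t ≈ t'`. -/
def Satisfies {A : Type*} (op : A → A → A) (t t' : BTree) : Prop :=
  ∀ f : ℕ → A, BTree.termOp op t f = BTree.termOp op t' f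

/-- The `n`-th member `s_n` of the associative spectrum of the magma `(A, op)`:
the number of distinct term operations induced by bracketings of size `n`. -/
noncomputable def spectrum {A : Type*} (op : A → A → A) (n : ℕ) : ℕ :=
  Set.ncard {g : (ℕ → A) → A | ∃ t : BTree, t.size = n ∧ g = BTree.termOp op t}

/-- Reachability (by a walk) in the digraph with edge relation `E`. -/
def Reach {V : Type*} (E : V → V → Prop) : V → V → Prop :=
  Relation.ReflTransGen E

/-- `u` and `v` lie in the same strongly connected component. -/
def SameSCC {V : Type*} (E : V → V → Prop) (u v : V) : Prop :=
  Reach E u v ∧ Reach E v u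

/-- The strongly connected component of `v`, as a set of vertices. -/
def scc {V : Type*} (E : V → V → Prop) (v : V) : Set V :=
  {u | SameSCC E u v}

/-- `v` lies in a nontrivial strongly connected component (one carrying at
least one edge), i.e. `v` lies on a closed walk of positive length. -/
def InNontrivialSCC {V : Type*} (E : V → V → Prop) (v : V) : Prop :=
  ∃ u, E v u ∧ Reach E u v

/-- The induced subgraph on the set `K` (with the edge relation `E`) is an
`m`-whirl: `K` is partitioned into blocks `B 0, …, B (m-1)` so that edges go
exactly from each block to the cyclically next one. -/
def IsWhirlOn {V : Type*} (E : V → V → Prop) (K : Set V) (m : ℕ) : Prop :=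
  ∃ B : ZMod m → Set V,
    (∀ i, (B i).Nonempty) ∧
    (∀ i, B i ⊆ K) ∧
    (∀ x ∈ K, ∃! i, x ∈ B i) ∧
    (∀ x ∈ K, ∀ y ∈ K, (E x y ↔ ∃ i, x ∈ B i ∧ y ∈ B (i + 1)))

/-- `p 0 → p 1 → ⋯ → p len` is a path (a walk with pairwise distinct
vertices) in the digraph with edge relation `E`. -/
def IsPath {V : Type*} (E : V → V → Prop) (len : ℕ) (p : ℕ → V) : Prop :=
  (∀ i < len, E (p i) (p (i + 1))) ∧
  (∀ i ≤ len, ∀ j ≤ len, p i = p j → i = j)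

/-- The walk `p 0 → ⋯ → p len` is pleasant: all its vertices belong to
trivial strongly connected components. -/
def IsPleasant {V : Type*} (E : V → V → Prop) (len : ℕ) (p : ℕ → V) : Prop :=
  ∀ i ≤ len, ¬ InNontrivialSCC E (p i)

/-- The connected component `K` (of an undirected graph) is complete
bipartite: it splits into two nonempty parts with edges exactly between
vertices of different parts. -/
def IsCompleteBipartiteOn {V : Type*} (E : V → V → Prop) (K : Set V) : Prop :=
  ∃ B1 B2 : Set V, B1.Nonempty ∧ B2.Nonempty ∧ B1 ∪ B2 = K ∧ B1 ∩ B2 = ∅ ∧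
    ∀ x ∈ K, ∀ y ∈ K, (E x y ↔ (x ∈ B1 ∧ y ∈ B2) ∨ (x ∈ B2 ∧ y ∈ B1))

/-- A DFS tree of size `n`: a rooted directed tree on the vertices
`x₁, …, xₙ` (here `Fin n`, the root being `0`), given by its parent function,
such that the parent of every non-root vertex precedes it and the vertex set
of the induced subtree rooted at any vertex `i` is an interval `[i, i']`.
(The parent of the root is, by convention, the root itself.) -/
structure DFSTree (n : ℕ) where
  parent : Fin n → Fin n
  parent_lt : ∀ i : Fin n, 0 < (i : ℕ) → (parent i : ℕ) < (i : ℕ)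
  parent_root : ∀ i : Fin n, (i : ℕ) = 0 → parent i = i
  interval : ∀ i j k : Fin n, i ≤ j → j ≤ k →
    (∃ a : ℕ, parent^[a] k = i) → (∃ a : ℕ, parent^[a] j = i)

/-- The depth of the vertex `i` in a DFS tree: the length of the path from
the root to `i`. -/
noncomputable def DFSTree.depth {n : ℕ} (T : DFSTree n) (i : Fin n) : ℕ :=
  sInf {k : ℕ | (T.parent^[k] i : ℕ) = 0}

/-- The height of a DFS tree: the maximum depth of a vertex. -/
noncomputable def DFSTree.height {n : ℕ} (T : DFSTree n) : ℕ :=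
  Finset.univ.sup fun i => T.depth i

/-- The vertex `i` is a leaf (childless vertex) of the DFS tree `T`. -/
def DFSTree.IsLeaf {n : ℕ} (T : DFSTree n) (i : Fin n) : Prop :=
  ∀ j : Fin n, T.parent j = i → j = i

/-- `t_h(n)`: the number of DFS trees of size `n` of height at most `h`. -/
noncomputable def tcount (h n : ℕ) : ℕ :=
  Nat.card {T : DFSTree n // T.height ≤ h}

/-- `d` is a zag sequence: `d₁ = 0`, `d₂ = 1`, and
`1 ≤ d_{i+1} ≤ d_i + 1` for all `i` (1-indexed as in the paper;
here `d : Fin n → ℕ` is 0-indexed). -/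
def IsZag {n : ℕ} (d : Fin n → ℕ) : Prop :=
  (∀ h : 0 < n, d ⟨0, h⟩ = 0) ∧
  (∀ h : 1 < n, d ⟨1, h⟩ = 1) ∧
  (∀ i : ℕ, ∀ h : i + 1 < n,
    1 ≤ d ⟨i + 1, h⟩ ∧ d ⟨i + 1, h⟩ ≤ d ⟨i, Nat.lt_of_succ_lt h⟩ + 1)

/-- `M(t,t')`: the largest `m` such that the depth sequences of the DFS trees
of the bracketings `t` and `t'` are congruent modulo `m`. -/
noncomputable def Mval (t t' : BTree) : ℕ :=
  sSup {m : ℕ | ∀ i < t.size, t.depth i ≡ t'.depth i [MOD m]}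

end AssocSpec

section Aux
open AssocSpec AssocSpec.BTree

lemma size_pos (t : BTree) : 1 ≤ t.size := by
  induction t with
  | leaf => simp [BTree.size]
  | node l r ihl ihr => simp [BTree.size]; omega

lemma length_depths (t : BTree) : t.depths.length = t.size := by
  induction t with
  | leaf => simp [BTree.depths, BTree.size]
  | node l r ihl ihr => simp [BTree.depths, BTree.size, ihl, ihr]

lemma depths_getD_zero (t : BTree) : t.depths.getD 0 0 = 0 := by
  induction t with
  | leaf => simp [BTree.depths]
  | node l r ihl ihr =>
    rw [BTree.depths, List.getD_eq_getElem _ _ (by simp [length_depths]; have := size_pos l; have := size_pos r; omega),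
      List.getElem_append_left (by rw [length_depths]; exact size_pos l),
      ← List.getD_eq_getElem _ 0]
    exact ihl

lemma depths_getD_pos (t : BTree) : ∀ j, 0 < j → j < t.size → 1 ≤ t.depths.getD j 0 := by
  induction t with
  | leaf => intro j hj hjs; simp [BTree.size] at hjs; omega
  | node l r ihl ihr =>
    intro j hj hjs
    rw [BTree.size] at hjs
    have hlen : j < (BTree.node l r).depths.length := by
      rw [length_depths]; exact hjs
    rw [List.getD_eq_getElem _ _ hlen]
    have hd : (BTree.node l r).depths = l.depths ++ r.depths.map (· + 1) := rfl
    by_cases hcase : j < l.size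
    · rw [List.getElem_of_eq hd, List.getElem_append_left (by rw [length_depths]; exact hcase),
        ← List.getD_eq_getElem _ 0]
      exact ihl j hj hcase
    · rw [List.getElem_of_eq hd, List.getElem_append_right (by rw [length_depths]; omega)]
      have hbs : j - l.depths.length < r.depths.length := by
        simp only [length_depths]; omega
      have hmap : ((r.depths.map (· + 1))[j - l.depths.length]'(by simpa using hbs)) =
          r.depths.getD (j - l.depths.length) 0 + 1 := by
        rw [List.getElem_map, List.getD_eq_getElem _ _ hbs]
      rw [hmap]
      omega

lemma depths_inj : ∀ t t' : BTree, t.depths = t'.depths → t = t' := by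
  intro t
  induction t with
  | leaf =>
    intro t' h
    cases t' with
    | leaf => rfl
    | node l' r' =>
      exfalso
      have h1 : (BTree.leaf).depths.length = (BTree.node l' r').depths.length := by rw [h]
      rw [length_depths, length_depths, BTree.size, BTree.size] at h1
      have := size_pos l'; have := size_pos r'; omega
  | node l r ihl ihr =>
    intro t' h
    cases t' with
    | leaf =>
      exfalso
      have h1 : (BTree.node l r).depths.length = (BTree.leaf).depths.length := by rw [h]
      rw [length_depths, length_depths, BTree.size, BTree.size] at h1
      have := size_pos l; have := size_pos r; omega
    | node l' r' =>
      -- show l.size = l'.size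
      have key : ∀ a b a' b' : BTree, a.size < a'.size →
          a.depths ++ b.depths.map (· + 1) = a'.depths ++ b'.depths.map (· + 1) → False := by
        intro a b a' b' hlt heq
        have hb' := size_pos b'
        have hlen : a'.size < (a.depths ++ b.depths.map (· + 1)).length := by
          have : (a.depths ++ b.depths.map (· + 1)).length = (a'.depths ++ b'.depths.map (· + 1)).length := by rw [heq]
          simp [length_depths] at this ⊢
          omega
        have hlenR : a'.size < (a'.depths ++ b'.depths.map (· + 1)).length := by
          simp [length_depths]; omega
        have hv : (a.depths ++ b.depths.map (· + 1))[a'.size] = (a'.depths ++ b'.depths.map (· + 1))[a'.size] := by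
          congr 1
        -- RHS value is 1
        have hR : (a'.depths ++ b'.depths.map (· + 1))[a'.size]'hlenR = 1 := by
          rw [List.getElem_append_right (by rw [length_depths])]
          rw [List.getElem_map]
          have : b'.depths[a'.size - a'.depths.length]'(by simp [length_depths]; omega) = b'.depths.getD (a'.size - a'.depths.length) 0 := by
            rw [List.getD_eq_getElem]
          rw [this, length_depths, Nat.sub_self, depths_getD_zero]
        -- LHS value is ≥ 2
        have hlen' : a'.size < a.size + b.size := by
          simp only [List.length_append, length_depths, List.length_map] at hlen; omega
        have hL : 2 ≤ (a.depths ++ b.depths.map (· + 1))[a'.size]'hlen := by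
          rw [List.getElem_append_right (by rw [length_depths]; omega)]
          have hbs : a'.size - a.depths.length < b.depths.length := by
            simp only [length_depths]; omega
          have hmap : ((b.depths.map (· + 1))[a'.size - a.depths.length]'(by simpa using hbs)) =
              b.depths.getD (a'.size - a.depths.length) 0 + 1 := by
            rw [List.getElem_map, List.getD_eq_getElem _ _ hbs]
          rw [hmap]
          have := depths_getD_pos b (a'.size - a.depths.length)
            (by rw [length_depths]; omega) (by simp only [length_depths] at hbs ⊢; omega)
          omega
        omega
      rw [BTree.depths, BTree.depths] at h
      have hsz : l.size = l'.size := by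
        rcases Nat.lt_trichotomy l.size l'.size with hc | hc | hc
        · exact absurd h (by intro hh; exact key l r l' r' hc hh)
        · exact hc
        · exact absurd h.symm (by intro hh; exact key l' r' l r hc hh)
      obtain ⟨h1, h2⟩ := List.append_inj h (by rw [length_depths, length_depths, hsz])
      have h2' : r.depths = r'.depths := by
        have : Function.Injective (fun x : ℕ => x + 1) := fun a b h => by simpa using h
        exact List.map_injective_iff.mpr this h2
      rw [ihl l' h1, ihr r' h2']

lemma eq_leaf_of_size_one (t : BTree) (h : t.size = 1) : t = BTree.leaf := by
  cases t with
  | leaf => rfl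
  | node l r =>
    exfalso; have := size_pos l; have := size_pos r
    rw [BTree.size] at h; omega

lemma depths_node_getD_left (l r : BTree) (i : ℕ) (hi : i < l.size) :
    (BTree.node l r).depths.getD i 0 = l.depths.getD i 0 := by
  have hd : (BTree.node l r).depths = l.depths ++ r.depths.map (· + 1) := rfl
  have h1 : i < l.depths.length := by rw [length_depths]; exact hi
  have h2 : i < (BTree.node l r).depths.length := by
    rw [length_depths, BTree.size]; omega
  rw [List.getD_eq_getElem _ _ h2, List.getElem_of_eq hd, List.getElem_append_left h1,
    List.getD_eq_getElem _ _ h1]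

lemma depths_node_getD_right (l r : BTree) (i : ℕ) (hi : i < r.size) :
    (BTree.node l r).depths.getD (l.size + i) 0 = r.depths.getD i 0 + 1 := by
  have hd : (BTree.node l r).depths = l.depths ++ r.depths.map (· + 1) := rfl
  have h2 : l.size + i < (BTree.node l r).depths.length := by
    rw [length_depths, BTree.size]; omega
  have h3 : i < r.depths.length := by rw [length_depths]; exact hi
  rw [List.getD_eq_getElem _ _ h2, List.getElem_of_eq hd,
    List.getElem_append_right (by rw [length_depths]; omega)]
  have hmap : ((r.depths.map (· + 1))[l.size + i - l.depths.length]'(by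
      simp only [List.length_map, length_depths]; omega)) =
      r.depths.getD (l.size + i - l.depths.length) 0 + 1 := by
    rw [List.getElem_map, List.getD_eq_getElem _ _ (by simp only [length_depths]; omega)]
  rw [hmap]
  congr 2
  rw [length_depths]; omega

lemma depth_zero (t : BTree) : t.depth 0 = 0 := depths_getD_zero t

section Eval

variable {m : ℕ}

/-- The edge condition for the evaluation of `t` (offsets from `k`) in the
graph algebra of the `m`-cycle. -/
def Cnd (m : ℕ) (t : BTree) (f : ℕ → Option (ZMod m)) (k : ℕ) : Prop :=
  ∀ pc ∈ t.edgesFrom k, ∃ x : ZMod m, f pc.1 = some x ∧ f pc.2 = some (x + 1)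

lemma gaOp_none_left {V : Type*} (E : V → V → Prop) (y : Option V) :
    gaOp E none y = none := rfl

lemma gaOp_none_right {V : Type*} (E : V → V → Prop) (x : Option V) :
    gaOp E x none = none := by cases x <;> rfl

lemma gaOp_some_some {V : Type*} (E : V → V → Prop) (x y : V) (h : E x y) :
    gaOp E (some x) (some y) = some x := by simp [gaOp, h]

lemma gaOp_some_some_not {V : Type*} (E : V → V → Prop) (x y : V) (h : ¬ E x y) :
    gaOp E (some x) (some y) = none := by simp [gaOp, h]

lemma cnd_node (l r : BTree) (f : ℕ → Option (ZMod m)) (k : ℕ) :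
    Cnd m (BTree.node l r) f k ↔
      ((∃ x : ZMod m, f k = some x ∧ f (k + l.size) = some (x + 1)) ∧
        Cnd m l f k ∧ Cnd m r f (k + l.size)) := by
  have he : (BTree.node l r).edgesFrom k =
      (k, k + l.size) :: (l.edgesFrom k ++ r.edgesFrom (k + l.size)) := rfl
  unfold Cnd
  rw [he]
  simp only [List.forall_mem_cons, List.mem_append]
  constructor
  · rintro ⟨h1, h2⟩
    exact ⟨h1, fun pc hpc => h2 pc (Or.inl hpc), fun pc hpc => h2 pc (Or.inr hpc)⟩
  · rintro ⟨h1, h2, h3⟩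
    exact ⟨h1, fun pc hpc => hpc.elim (h2 pc) (h3 pc)⟩

lemma cnd_leaf (f : ℕ → Option (ZMod m)) (k : ℕ) : Cnd m BTree.leaf f k := by
  intro pc hpc
  have : BTree.leaf.edgesFrom k = [] := rfl
  rw [this] at hpc
  cases hpc

lemma eval_of_cnd (t : BTree) (f : ℕ → Option (ZMod m)) (k : ℕ) (h : Cnd m t f k) :
    BTree.evalFrom (gaOp (fun i j : ZMod m => j = i + 1)) t f k = f k := by
  induction t generalizing k with
  | leaf => rfl
  | node l r ihl ihr =>
    rw [cnd_node] at h
    obtain ⟨⟨x, hx1, hx2⟩, hl, hr⟩ := h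
    have hev : BTree.evalFrom (gaOp (fun i j : ZMod m => j = i + 1)) (BTree.node l r) f k =
        gaOp (fun i j : ZMod m => j = i + 1)
          (BTree.evalFrom (gaOp (fun i j : ZMod m => j = i + 1)) l f k)
          (BTree.evalFrom (gaOp (fun i j : ZMod m => j = i + 1)) r f (k + l.size)) := rfl
    rw [hev, ihl _ hl, ihr _ hr, hx1, hx2]
    exact gaOp_some_some _ x (x + 1) rfl

lemma eval_of_not_cnd (t : BTree) (f : ℕ → Option (ZMod m)) (k : ℕ) (h : ¬ Cnd m t f k) :
    BTree.evalFrom (gaOp (fun i j : ZMod m => j = i + 1)) t f k = none := by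
  induction t generalizing k with
  | leaf => exact absurd (cnd_leaf f k) h
  | node l r ihl ihr =>
    have hev : BTree.evalFrom (gaOp (fun i j : ZMod m => j = i + 1)) (BTree.node l r) f k =
        gaOp (fun i j : ZMod m => j = i + 1)
          (BTree.evalFrom (gaOp (fun i j : ZMod m => j = i + 1)) l f k)
          (BTree.evalFrom (gaOp (fun i j : ZMod m => j = i + 1)) r f (k + l.size)) := rfl
    rw [hev]
    by_cases hl : Cnd m l f k
    · by_cases hr : Cnd m r f (k + l.size)
      · have hh : ¬ ∃ x : ZMod m, f k = some x ∧ f (k + l.size) = some (x + 1) :=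
          fun he => h ((cnd_node l r f k).mpr ⟨he, hl, hr⟩)
        rw [eval_of_cnd l f k hl, eval_of_cnd r f _ hr]
        cases hfk : f k with
        | none => rfl
        | some x =>
          cases hfk2 : f (k + l.size) with
          | none => exact gaOp_none_right _ _
          | some y =>
            apply gaOp_some_some_not
            intro hE
            exact hh ⟨x, hfk, by rw [hfk2, hE]⟩
      · rw [ihr _ hr]; exact gaOp_none_right _ _
    · rw [ihl _ hl]; exact gaOp_none_left _ _

lemma cnd_iff (t : BTree) (f : ℕ → Option (ZMod m)) (k : ℕ) (x0 : ZMod m)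
    (h0 : f k = some x0) :
    Cnd m t f k ↔ ∀ i < t.size, f (k + i) = some (x0 + (t.depth i : ZMod m)) := by
  induction t generalizing k x0 with
  | leaf =>
    simp only [cnd_leaf f k, true_iff]
    intro i hi
    rw [BTree.size] at hi
    have : i = 0 := by omega
    subst this
    simp [BTree.depth, BTree.depths, h0]
  | node l r ihl ihr =>
    rw [cnd_node]
    constructor
    · rintro ⟨⟨x, hx1, hx2⟩, hl, hr⟩
      have hx : x = x0 := by rw [h0] at hx1; exact (Option.some_inj.mp hx1).symm
      subst hx
      have Hl := (ihl k x h0).mp hl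
      have Hr := (ihr (k + l.size) (x + 1) hx2).mp hr
      intro i hi
      rw [BTree.size] at hi
      by_cases hc : i < l.size
      · have := Hl i hc
        rwa [BTree.depth, depths_node_getD_left l r i hc]
      · have hceq : i = l.size + (i - l.size) := by omega
        have H2 := Hr (i - l.size) (by omega)
        have hk : k + l.size + (i - l.size) = k + i := by omega
        rw [hk] at H2
        rw [H2]
        have hd : (BTree.node l r).depths.getD i 0 = r.depths.getD (i - l.size) 0 + 1 := by
          have h5 := depths_node_getD_right l r (i - l.size) (by omega)
          rwa [← hceq] at h5
        simp only [BTree.depth]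
        rw [hd]
        congr 1
        push_cast
        ring
    · intro H
      have hd1 : (BTree.node l r).depth l.size = 1 := by
        have := depths_node_getD_right l r 0 (size_pos r)
        rw [Nat.add_zero] at this
        rw [BTree.depth, this, depths_getD_zero]
      have h1 : f (k + l.size) = some (x0 + 1) := by
        have := H l.size (by rw [BTree.size]; have := size_pos r; omega)
        rw [hd1] at this
        simpa using this
      refine ⟨⟨x0, h0, h1⟩, (ihl k x0 h0).mpr ?_, (ihr _ (x0 + 1) h1).mpr ?_⟩
      · intro i hi
        have := H i (by rw [BTree.size]; have := size_pos r; omega)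
        rwa [BTree.depth, depths_node_getD_left l r i hi] at this
      · intro i hi
        have := H (l.size + i) (by rw [BTree.size]; omega)
        rw [BTree.depth, depths_node_getD_right l r i hi, ← add_assoc] at this
        rw [this, BTree.depth]
        congr 1
        push_cast
        ring

lemma termOp_eq_some (t : BTree) (f : ℕ → Option (ZMod m)) (x0 : ZMod m)
    (hx : ∀ i < t.size, f i = some (x0 + (t.depth i : ZMod m))) :
    BTree.termOp (gaOp (fun i j : ZMod m => j = i + 1)) t f = some x0 := by
  have h0 : f 0 = some x0 := by
    have := hx 0 (size_pos t)
    rwa [depth_zero, Nat.cast_zero, add_zero] at this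
  have hc : Cnd m t f 0 := by
    rw [cnd_iff t f 0 x0 h0]
    intro i hi
    rw [Nat.zero_add]
    exact hx i hi
  rw [BTree.termOp, eval_of_cnd t f 0 hc, h0]

lemma termOp_eq_none (t : BTree) (h2 : 2 ≤ t.size) (f : ℕ → Option (ZMod m))
    (hx : ¬ ∃ x0 : ZMod m, ∀ i < t.size, f i = some (x0 + (t.depth i : ZMod m))) :
    BTree.termOp (gaOp (fun i j : ZMod m => j = i + 1)) t f = none := by
  rw [BTree.termOp]
  apply eval_of_not_cnd
  intro hc
  cases t with
  | leaf => rw [BTree.size] at h2; omega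
  | node l r =>
    obtain ⟨⟨x, hx1, hx2⟩, -, -⟩ := (cnd_node l r f 0).mp hc
    rw [Nat.zero_add] at hx2
    exact hx ⟨x, fun i hi => by
      have := (cnd_iff _ f 0 x hx1).mp hc i hi
      rwa [Nat.zero_add] at this⟩

lemma sat_iff (n : ℕ) (t t' : BTree)
    (ht : t.size = n) (ht' : t'.size = n) (hn : 2 ≤ n) :
    Satisfies (gaOp (fun i j : ZMod m => j = i + 1)) t t' ↔
      ∀ i < n, t.depth i ≡ t'.depth i [MOD m] := by
  constructor
  · intro hsat i hi
    set f : ℕ → Option (ZMod m) := fun i => some ((t.depth i : ZMod m)) with hf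
    have h1 : BTree.termOp (gaOp (fun i j : ZMod m => j = i + 1)) t f = some 0 :=
      termOp_eq_some t f 0 (fun i hi => by simp [hf])
    have h2 : BTree.termOp (gaOp (fun i j : ZMod m => j = i + 1)) t' f = some 0 := by
      rw [← hsat f]; exact h1
    have hP : ∃ y0 : ZMod m, ∀ i < t'.size, f i = some (y0 + (t'.depth i : ZMod m)) := by
      by_contra hcon
      rw [termOp_eq_none t' (by omega) f hcon] at h2
      cases h2
    obtain ⟨y0, hy⟩ := hP
    have hy0 : y0 = 0 := by
      have := hy 0 (by omega)
      simp [hf, depth_zero] at this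
      exact this.symm
    subst hy0
    have := hy i (by omega)
    simp only [hf, Option.some_inj, zero_add] at this
    exact (ZMod.natCast_eq_natCast_iff _ _ _).mp this
  · intro hcong f
    have hcast : ∀ i < n, ((t.depth i : ZMod m)) = (t'.depth i : ZMod m) :=
      fun i hi => (ZMod.natCast_eq_natCast_iff _ _ _).mpr (hcong i hi)
    by_cases hP : ∃ x0 : ZMod m, ∀ i < t.size, f i = some (x0 + (t.depth i : ZMod m))
    · obtain ⟨x0, hx⟩ := hP
      rw [termOp_eq_some t f x0 hx, termOp_eq_some t' f x0 (fun i hi => by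
        rw [← hcast i (by omega)]; exact hx i (by omega))]
    · rw [termOp_eq_none t (by omega) f hP, termOp_eq_none t' (by omega) f (by
        intro hcon
        obtain ⟨x0, hx⟩ := hcon
        exact hP ⟨x0, fun i hi => by
          rw [hcast i (by omega)]; exact hx i (by omega)⟩)]

end Eval

end Aux

open AssocSpec in
/-- For distinct bracketings `t, t'` of size `n` and `m ≥ 1`,
the graph algebra of the directed `m`-cycle `C_m` satisfies `t ≈ t'` iff
`m ∣ M(t,t')`. -/
theorem stmt14 (m : ℕ) (hm : 1 ≤ m) (n : ℕ) (t t' : BTree)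
    (ht : t.size = n) (ht' : t'.size = n) (hne : t ≠ t') :
    Satisfies (gaOp (fun i j : ZMod m => j = i + 1)) t t' ↔ m ∣ Mval t t' := by
  have hn : 2 ≤ n := by
    by_contra hcon
    have h1 := size_pos t
    have : n = 1 := by omega
    apply hne
    rw [eq_leaf_of_size_one t (by omega), eq_leaf_of_size_one t' (by omega)]
  -- the gcd of the differences of the depth sequences
  set D : ℕ → ℕ := fun i => ((t.depth i : ℤ) - (t'.depth i : ℤ)).natAbs with hD
  set g : ℕ := (Finset.range n).gcd D with hg
  have hmem : ∀ k : ℕ, (∀ i < n, t.depth i ≡ t'.depth i [MOD k]) ↔ k ∣ g := by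
    intro k
    constructor
    · intro h
      apply Finset.dvd_gcd
      intro i hi
      rw [Finset.mem_range] at hi
      have h1 : (k : ℤ) ∣ (t'.depth i : ℤ) - (t.depth i : ℤ) :=
        (Nat.modEq_iff_dvd).mp (h i hi)
      have h2 : (k : ℤ) ∣ (t.depth i : ℤ) - (t'.depth i : ℤ) := by
        have := h1.neg_right
        rwa [neg_sub] at this
      have h3 := Int.natAbs_dvd_natAbs.mpr h2
      rwa [Int.natAbs_natCast] at h3
    · intro h i hi
      have h2 : k ∣ D i := dvd_trans h (Finset.gcd_dvd (Finset.mem_range.mpr hi))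
      rw [Nat.modEq_iff_dvd]
      have h3 : ((k : ℤ)).natAbs ∣ ((t.depth i : ℤ) - (t'.depth i : ℤ)).natAbs := by
        rwa [Int.natAbs_natCast]
      have h4 := Int.natAbs_dvd_natAbs.mp h3
      have := h4.neg_right
      rwa [neg_sub] at this
  have hgne : g ≠ 0 := by
    intro hg0
    rw [hg, Finset.gcd_eq_zero_iff] at hg0
    have hdeq : ∀ i < n, t.depth i = t'.depth i := by
      intro i hi
      have := hg0 i (Finset.mem_range.mpr hi)
      simp only [hD, Int.natAbs_eq_zero, sub_eq_zero, Nat.cast_inj] at this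
      exact this
    apply hne
    apply depths_inj
    apply List.ext_getElem (by rw [length_depths, length_depths, ht, ht'])
    intro i h1 h2
    rw [← List.getD_eq_getElem _ 0 h1, ← List.getD_eq_getElem _ 0 h2]
    exact hdeq i (by rw [length_depths, ht] at h1; exact h1)
  have hgpos : 0 < g := Nat.pos_of_ne_zero hgne
  have hM : Mval t t' = g := by
    have hset : {k : ℕ | ∀ i < t.size, t.depth i ≡ t'.depth i [MOD k]} = {k : ℕ | k ∣ g} := by
      ext k
      simp only [Set.mem_setOf_eq, ht]
      exact hmem k
    rw [Mval, hset]
    apply le_antisymm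
    · apply csSup_le
      · exact ⟨1, Set.mem_setOf_eq ▸ one_dvd g⟩
      · intro x hx
        exact Nat.le_of_dvd hgpos hx
    · exact le_csSup ⟨g, fun x hx => Nat.le_of_dvd hgpos hx⟩ (dvd_refl g)
  rw [sat_iff n t t' ht ht' hn, hM]
  exact hmem m
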